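/- For fixed real numbers a ≤ x ≤ b, the soft-clipping function clip_s(x;a,b) = s·log(e^{x/s} + e^{a/s}) − s·log(e^{(x−b)/s} + 1) converges to x as s → 0⁺. -/
import Mathlib


open Real Filter Set

noncomputable def softClip (s x a b : ℝ) : ℝ :=
  s * Real.log (Real.exp (x / s) + Real.exp (a / s)) -
    s * Real.log (Real.exp ((x - b) / s) + 1)

lemma aux_tendsto (t : ℝ) (ht : t ≤ 0) :
    Tendsto (fun s : ℝ => s * Real.log (1 + Real.exp (t / s)))
      (nhdsWithin 0 (Set.Ioi 0)) (nhds 0) := by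
  have hup : Tendsto (fun s : ℝ => s * Real.log 2) (nhdsWithin 0 (Set.Ioi 0)) (nhds 0) := by
    have h : Tendsto (fun s : ℝ => s * Real.log 2) (nhds 0) (nhds (0 * Real.log 2)) :=
      (continuous_id.mul continuous_const).tendsto 0
    simpa using h.mono_left nhdsWithin_le_nhds
  refine tendsto_of_tendsto_of_tendsto_of_le_of_le' tendsto_const_nhds hup ?_ ?_
  · filter_upwards [self_mem_nhdsWithin] with s hs
    have hs' : (0:ℝ) < s := hs
    have h1 : (1:ℝ) ≤ 1 + Real.exp (t / s) := by
      have := Real.exp_pos (t / s); linarith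
    have : 0 ≤ Real.log (1 + Real.exp (t / s)) := Real.log_nonneg h1
    positivity
  · filter_upwards [self_mem_nhdsWithin] with s hs
    have hs' : (0:ℝ) < s := hs
    have hexp : Real.exp (t / s) ≤ 1 := by
      rw [Real.exp_le_one_iff]
      exact div_nonpos_of_nonpos_of_nonneg ht hs'.le
    have hlog : Real.log (1 + Real.exp (t / s)) ≤ Real.log 2 := by
      apply Real.log_le_log (by positivity)
      linarith
    exact mul_le_mul_of_nonneg_left hlog hs'.le

theorem softClip_tendsto_mid (a b x : ℝ) (hax : a ≤ x) (hxb : x ≤ b) :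
    Tendsto (fun s : ℝ => softClip s x a b) (nhdsWithin 0 (Set.Ioi 0)) (nhds x) := by
  have hA := aux_tendsto (a - x) (by linarith)
  have hB := aux_tendsto (x - b) (by linarith)
  have key : Tendsto (fun s : ℝ => x + s * Real.log (1 + Real.exp ((a - x) / s))
      - s * Real.log (1 + Real.exp ((x - b) / s))) (nhdsWithin 0 (Set.Ioi 0)) (nhds x) := by
    have h : Tendsto (fun s : ℝ => x + s * Real.log (1 + Real.exp ((a - x) / s))
        - s * Real.log (1 + Real.exp ((x - b) / s))) (nhdsWithin 0 (Set.Ioi 0))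
        (nhds (x + 0 - 0)) := (tendsto_const_nhds.add hA).sub hB
    simpa using h
  refine key.congr' ?_
  filter_upwards [self_mem_nhdsWithin] with s hs
  have hs' : (0:ℝ) < s := hs
  have h1 : Real.exp (x / s) + Real.exp (a / s)
      = Real.exp (x / s) * (1 + Real.exp ((a - x) / s)) := by
    rw [mul_add, mul_one, ← Real.exp_add]
    ring_nf
  have h2 : Real.exp ((x - b) / s) + 1 = 1 + Real.exp ((x - b) / s) := by ring
  rw [softClip, h1, h2, Real.log_mul (Real.exp_pos _).ne' (by positivity),
    Real.log_exp, mul_add, mul_div_cancel₀ _ hs'.ne']
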